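/- Fibrant cubespaces satisfy the gluing property: if X is a cubespace with k-completion for every k ≥ 0, then for every k and all c₁, c₂, c₃ ∈ C^k(X), if the concatenations [c₁,c₂] and [c₂,c₃] lie in C^{k+1}(X), then [c₁,c₃] ∈ C^{k+1}(X). -/

import Mathlib

open Function Set

/-- The all-ones vertex `1⃗` of the discrete cube `{0,1}^k`. -/
def topVtx (k : ℕ) : Fin k → Bool := fun _ => true

/-- A family of cube sets on a space `X`: for each `k`, a set of `k`-configurations. -/
structure CubeFamily (X : Type*) where
  cubes : ∀ k : ℕ, Set ((Fin k → Bool) → X)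

/-- A morphism of discrete cubes: each coordinate function is constantly `0`,
constantly `1`, a coordinate `ω i`, or a negated coordinate `!ω i`. -/
def IsDiscreteCubeMorphism {k l : ℕ} (ρ : (Fin k → Bool) → (Fin l → Bool)) : Prop :=
  ∀ j : Fin l, (∀ ω, ρ ω j = false) ∨ (∀ ω, ρ ω j = true) ∨
    (∃ i : Fin k, ∀ ω, ρ ω j = ω i) ∨ (∃ i : Fin k, ∀ ω, ρ ω j = !(ω i))

/-- The cubespace axioms: cube sets are closed, `C^0(X) = X`, and cubes are stable
under precomposition with morphisms of discrete cubes. -/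
def CubeFamily.IsCubespace {X : Type*} [TopologicalSpace X] (S : CubeFamily X) : Prop :=
  (∀ k, IsClosed (S.cubes k)) ∧ S.cubes 0 = Set.univ ∧
    ∀ {k l : ℕ} (ρ : (Fin k → Bool) → (Fin l → Bool)), IsDiscreteCubeMorphism ρ →
      ∀ c ∈ S.cubes l, (fun ω => c (ρ ω)) ∈ S.cubes k

/-- A cubespace morphism: a continuous map sending cubes to cubes. -/
def IsMorphism {X Y : Type*} [TopologicalSpace X] [TopologicalSpace Y]
    (S : CubeFamily X) (T : CubeFamily Y) (f : X → Y) : Prop :=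
  Continuous f ∧ ∀ k, ∀ c ∈ S.cubes k, (fun ω => f (c ω)) ∈ T.cubes k

/-- `lam` is a `k`-corner: each lower face `{ω : ω i = 0}` restricts to a `(k-1)`-cube.
(The restriction of `lam` to the face `{ω : ω i = 0}` is a `(k-1)`-cube iff the
degenerate configuration `ω ↦ lam (update ω i false)` is a `k`-cube, by the
discrete-cube-morphism axiom; the value of `lam` at `topVtx k` is irrelevant here.) -/
def IsCubeCorner {X : Type*} (S : CubeFamily X) {k : ℕ} (lam : (Fin k → Bool) → X) : Prop :=
  ∀ i : Fin k, (fun ω => lam (Function.update ω i false)) ∈ S.cubes k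

/-- Relative `k`-completion for `f : X → Y`: every `k`-corner in `X` whose `f`-image
extends to a `k`-cube `c` of `Y` can be completed to a `k`-cube of `X` lying over `c`. -/
def HasCompletionAt {X Y : Type*} (S : CubeFamily X) (T : CubeFamily Y) (f : X → Y)
    (k : ℕ) : Prop :=
  ∀ (lam : (Fin k → Bool) → X) (c : (Fin k → Bool) → Y), IsCubeCorner S lam → c ∈ T.cubes k →
    (∀ ω, ω ≠ topVtx k → f (lam ω) = c ω) →
    ∃ c₀ ∈ S.cubes k, (∀ ω, ω ≠ topVtx k → c₀ ω = lam ω) ∧ (fun ω => f (c₀ ω)) = c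

/-- A fibration: a cubespace morphism with `k`-completion for all `k ≥ 0`. -/
def IsFibration {X Y : Type*} [TopologicalSpace X] [TopologicalSpace Y]
    (S : CubeFamily X) (T : CubeFamily Y) (f : X → Y) : Prop :=
  IsMorphism S T f ∧ ∀ k, HasCompletionAt S T f k

/-- Relative `k`-uniqueness: two `k`-cubes agreeing off the top vertex with equal
`f`-images are equal. -/
def HasUniquenessAt {X Y : Type*} (S : CubeFamily X) (T : CubeFamily Y) (f : X → Y)
    (k : ℕ) : Prop :=
  ∀ c ∈ S.cubes k, ∀ c' ∈ S.cubes k, (∀ ω, ω ≠ topVtx k → c ω = c' ω) →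
    (fun ω => f (c ω)) = (fun ω => f (c' ω)) → c = c'

/-- An `s`-fibration: a fibration with `(s+1)`-uniqueness. -/
def IsSFibration {X Y : Type*} [TopologicalSpace X] [TopologicalSpace Y]
    (S : CubeFamily X) (T : CubeFamily Y) (f : X → Y) (s : ℕ) : Prop :=
  IsFibration S T f ∧ HasUniquenessAt S T f (s + 1)

/-- Absolute fibrancy: every `k`-corner completes to a `k`-cube. -/
def IsFibrant {X : Type*} (S : CubeFamily X) : Prop :=
  ∀ (k : ℕ) (lam : (Fin k → Bool) → X), IsCubeCorner S lam →
    ∃ c₀ ∈ S.cubes k, ∀ ω, ω ≠ topVtx k → c₀ ω = lam ω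

/-- Absolute `k`-uniqueness. -/
def HasUnique {X : Type*} (S : CubeFamily X) (k : ℕ) : Prop :=
  ∀ c ∈ S.cubes k, ∀ c' ∈ S.cubes k, (∀ ω, ω ≠ topVtx k → c ω = c' ω) → c = c'

/-- Ergodicity: every pair of points is a `1`-cube. -/
def IsErgodic {X : Type*} (S : CubeFamily X) : Prop := S.cubes 1 = Set.univ

/-- Concatenation `[c₁, c₂]` of two `k`-configurations along the last coordinate. -/
def concatCube {X : Type*} {k : ℕ} (c₁ c₂ : (Fin k → Bool) → X) :
    (Fin (k + 1) → Bool) → X :=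
  fun ω => if ω (Fin.last k) = true then c₂ (fun i => ω i.castSucc)
           else c₁ (fun i => ω i.castSucc)

/-- The gluing property. -/
def IsGluing {X : Type*} (S : CubeFamily X) : Prop :=
  ∀ (k : ℕ) (c₁ c₂ c₃ : (Fin k → Bool) → X), c₁ ∈ S.cubes k → c₂ ∈ S.cubes k →
    c₃ ∈ S.cubes k → concatCube c₁ c₂ ∈ S.cubes (k + 1) →
    concatCube c₂ c₃ ∈ S.cubes (k + 1) → concatCube c₁ c₃ ∈ S.cubes (k + 1)

/-- The `s`-th canonical relation `x ∼ₛ x'`. -/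
def CanonRel {X : Type*} (S : CubeFamily X) (s : ℕ) (x x' : X) : Prop :=
  ∃ c ∈ S.cubes (s + 1), ∃ c' ∈ S.cubes (s + 1),
    (∀ ω, ω ≠ topVtx (s + 1) → c ω = c' ω) ∧ c (topVtx (s + 1)) = x ∧ c' (topVtx (s + 1)) = x'

/-- The `s`-th canonical relation relative to `f` : `x ∼_{f,s} x'`. -/
def RelCanonRel {X Y : Type*} (S : CubeFamily X) (f : X → Y) (s : ℕ) (x x' : X) : Prop :=
  CanonRel S s x x' ∧ f x = f x'

section GluingAux

variable {X : Type*}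

/-- pointwise AND (meet) of two 0-1 vectors -/
def mmeet {n : ℕ} (ω v : Fin n → Bool) : Fin n → Bool := fun i => ω i && v i

lemma mmeet_apply {n : ℕ} (ω v : Fin n → Bool) (i : Fin n) :
    mmeet ω v i = (ω i && v i) := rfl

lemma mmeet_top {n : ℕ} (ω : Fin n → Bool) : mmeet ω (topVtx n) = ω :=
  funext fun i => Bool.and_true _

/-- masked completion at the top of the subcube `[0,v]` -/
lemma masked_completion (S : CubeFamily X) (hfib : IsFibrant S)
    (hmor : ∀ {k l : ℕ} (ρ : (Fin k → Bool) → (Fin l → Bool)), IsDiscreteCubeMorphism ρ →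
      ∀ c ∈ S.cubes l, (fun ω => c (ρ ω)) ∈ S.cubes k) :
    ∀ (n : ℕ) (v : Fin n → Bool) (φ : (Fin n → Bool) → X),
      (∀ i, v i = true → (fun ω => φ (mmeet (Function.update ω i false) v)) ∈ S.cubes n) →
      ∃ x : X, (fun ω => if mmeet ω v = v then x else φ (mmeet ω v)) ∈ S.cubes n := by
  have topcase : ∀ (n : ℕ) (φ : (Fin n → Bool) → X),
      (∀ i, (fun ω => φ (mmeet (Function.update ω i false) (topVtx n))) ∈ S.cubes n) →
      ∃ x : X, (fun ω => if mmeet ω (topVtx n) = topVtx n then x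
          else φ (mmeet ω (topVtx n))) ∈ S.cubes n := by
    intro n φ h
    have corner : IsCubeCorner S φ := by
      intro i
      have := h i
      simpa only [mmeet_top] using this
    obtain ⟨c₀, hc₀, hagree⟩ := hfib n φ corner
    refine ⟨c₀ (topVtx n), ?_⟩
    have heq : (fun ω => if mmeet ω (topVtx n) = topVtx n then c₀ (topVtx n)
        else φ (mmeet ω (topVtx n))) = c₀ := by
      funext ω
      simp only [mmeet_top]
      by_cases hω : ω = topVtx n
      · simp [hω]
      · simp only [if_neg hω]
        exact (hagree ω hω).symm
    rw [heq]; exact hc₀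
  intro n
  induction n with
  | zero =>
    intro v φ h
    have hv : v = topVtx 0 := funext fun i => i.elim0
    subst hv
    exact topcase 0 φ (fun i => h i rfl)
  | succ m ih =>
    intro v φ h
    by_cases hv : v = topVtx (m + 1)
    · subst hv
      exact topcase (m + 1) φ (fun i => h i rfl)
    · -- pick a coordinate where v is false
      have hex : ∃ i₀, v i₀ = false := by
        by_contra hc
        push_neg at hc
        exact hv (funext fun i => by
          cases hvi : v i with
          | false => exact absurd hvi (hc i)
          | true => rfl)
      obtain ⟨i₀, hi₀⟩ := hex
      set ψ : (Fin m → Bool) → X := fun θ => φ (i₀.insertNth false θ) with hψ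
      set vd : Fin m → Bool := fun l => v (i₀.succAbove l) with hvd
      -- transfer the hypotheses
      have hyp' : ∀ l, vd l = true →
          (fun θ => ψ (mmeet (Function.update θ l false) vd)) ∈ S.cubes m := by
        intro l hl
        have B := h (i₀.succAbove l) hl
        have mι : IsDiscreteCubeMorphism (fun (θ : Fin m → Bool) => i₀.insertNth false θ) := by
          intro j
          by_cases hj : j = i₀
          · refine Or.inl (fun θ => ?_)
            rw [hj]
            simp
          · obtain ⟨l', hl'⟩ := Fin.exists_succAbove_eq hj
            refine Or.inr (Or.inr (Or.inl ⟨l', fun θ => ?_⟩))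
            rw [← hl']
            simp
        have comp := hmor _ mι _ B
        have comp' : (fun θ => φ (mmeet (Function.update (i₀.insertNth false θ)
            (i₀.succAbove l) false) v)) ∈ S.cubes m := comp
        have E1 : (fun θ => φ (mmeet (Function.update (i₀.insertNth false θ)
            (i₀.succAbove l) false) v)) =
            (fun θ => ψ (mmeet (Function.update θ l false) vd)) := by
          funext θ
          show φ _ = φ _
          congr 1
          funext j
          by_cases hj : j = i₀
          · rw [hj]
            simp only [mmeet_apply, Fin.insertNth_apply_same]
            rw [Function.update_of_ne (Fin.succAbove_ne i₀ l).symm]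
            simp
          · obtain ⟨l', hl'⟩ := Fin.exists_succAbove_eq hj
            rw [← hl']
            simp only [mmeet_apply, Fin.insertNth_apply_succAbove]
            by_cases hll : l' = l
            · subst hll
              simp
            · have hne : i₀.succAbove l' ≠ i₀.succAbove l :=
                fun hh => hll (Fin.succAbove_right_injective hh)
              rw [Function.update_of_ne hne, Function.update_of_ne hll]
              simp only [Fin.insertNth_apply_succAbove]
              rfl
        rw [E1] at comp'
        exact comp'
      obtain ⟨x, hx⟩ := ih vd ψ hyp'
      refine ⟨x, ?_⟩
      set π : (Fin (m + 1) → Bool) → (Fin m → Bool) := fun ω l => ω (i₀.succAbove l) with hπ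
      have mπ : IsDiscreteCubeMorphism π :=
        fun l => Or.inr (Or.inr (Or.inl ⟨i₀.succAbove l, fun ω => rfl⟩))
      have comp := hmor π mπ _ hx
      have comp' : (fun ω => if mmeet (π ω) vd = vd then x else ψ (mmeet (π ω) vd))
          ∈ S.cubes (m + 1) := comp
      have key0 : i₀.insertNth false vd = v := by
        have h1 : vd = i₀.removeNth v := rfl
        rw [h1, ← hi₀]
        exact Fin.insertNth_self_removeNth i₀ v
      have key1 : ∀ ω : Fin (m + 1) → Bool,
          i₀.insertNth false (mmeet (π ω) vd) = mmeet ω v := by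
        intro ω
        funext j
        by_cases hj : j = i₀
        · rw [hj]
          simp only [mmeet_apply, Fin.insertNth_apply_same, hi₀]
          exact (Bool.and_false _).symm
        · obtain ⟨l, hl⟩ := Fin.exists_succAbove_eq hj
          rw [← hl]
          simp only [mmeet_apply, Fin.insertNth_apply_succAbove]
          rfl
      have key2 : ∀ ω : Fin (m + 1) → Bool, (mmeet (π ω) vd = vd) ↔ (mmeet ω v = v) := by
        intro ω
        constructor
        · intro hmw
          rw [← key1 ω, hmw, key0]
        · intro hmw
          funext l
          exact congrFun hmw (i₀.succAbove l)
      have E2 : (fun ω => if mmeet (π ω) vd = vd then x else ψ (mmeet (π ω) vd)) =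
          (fun ω => if mmeet ω v = v then x else φ (mmeet ω v)) := by
        funext ω
        by_cases hc : mmeet ω v = v
        · rw [if_pos ((key2 ω).mpr hc), if_pos hc]
        · rw [if_neg (fun hh => hc ((key2 ω).mp hh)), if_neg hc]
          show φ _ = φ _
          rw [key1 ω]
      rw [E2] at comp'
      exact comp'

/-- extend a configuration that is good on a downward-closed set to a full cube -/
lemma fill_lemma (S : CubeFamily X) (hfib : IsFibrant S)
    (hmor : ∀ {k l : ℕ} (ρ : (Fin k → Bool) → (Fin l → Bool)), IsDiscreteCubeMorphism ρ →
      ∀ c ∈ S.cubes l, (fun ω => c (ρ ω)) ∈ S.cubes k) (n : ℕ) :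
    ∀ (m : ℕ) (K : Finset (Fin n → Bool)) (φ : (Fin n → Bool) → X),
      Kᶜ.card ≤ m →
      (∀ u ∈ K, ∀ w : Fin n → Bool, w ≤ u → w ∈ K) →
      (∀ v ∈ K, (fun ω => φ (mmeet ω v)) ∈ S.cubes n) →
      ∃ ψ ∈ S.cubes n, ∀ ω ∈ K, ψ ω = φ ω := by
  intro m
  induction m with
  | zero =>
    intro K φ hcard hdown hgood
    have hKc : Kᶜ = ∅ := Finset.card_eq_zero.mp (Nat.le_zero.mp hcard)
    have htop : topVtx n ∈ K := by
      by_contra hc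
      have : topVtx n ∈ Kᶜ := Finset.mem_compl.mpr hc
      rw [hKc] at this
      exact absurd this (Finset.notMem_empty _)
    have := hgood _ htop
    simp only [mmeet_top] at this
    exact ⟨φ, this, fun ω _ => rfl⟩
  | succ m ih =>
    intro K φ hcard hdown hgood
    by_cases hKc : Kᶜ = ∅
    · have htop : topVtx n ∈ K := by
        by_contra hc
        have : topVtx n ∈ Kᶜ := Finset.mem_compl.mpr hc
        rw [hKc] at this
        exact absurd this (Finset.notMem_empty _)
      have := hgood _ htop
      simp only [mmeet_top] at this
      exact ⟨φ, this, fun ω _ => rfl⟩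
    · obtain ⟨v, hvKc, hvmin⟩ := Finset.exists_minimal (Finset.nonempty_of_ne_empty hKc)
      have hvK : v ∉ K := Finset.mem_compl.mp hvKc
      -- strict predecessors of v are in K
      have hpred : ∀ w : Fin n → Bool, w < v → w ∈ K := by
        intro w hw
        by_contra hc
        exact lt_irrefl _ (lt_of_lt_of_le hw (hvmin (Finset.mem_compl.mpr hc) hw.le))
      -- apply masked completion
      have hyp : ∀ i, v i = true →
          (fun ω => φ (mmeet (Function.update ω i false) v)) ∈ S.cubes n := by
        intro i hi
        have heq : (fun ω => φ (mmeet (Function.update ω i false) v)) =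
            (fun ω => φ (mmeet ω (Function.update v i false))) := by
          funext ω
          congr 1
          funext j
          simp only [mmeet_apply]
          by_cases hj : j = i
          · rw [hj]
            rw [Function.update_self, Function.update_self]
            simp
          · rw [Function.update_of_ne hj, Function.update_of_ne hj]
        have hvK' : Function.update v i false ∈ K := by
          apply hpred
          apply lt_of_le_of_ne
          · intro j
            by_cases hj : j = i
            · rw [hj, Function.update_self]
              exact Bool.false_le _
            · rw [Function.update_of_ne hj]
          · intro hEq
            have h2 := congrFun hEq i
            rw [Function.update_self] at h2
            rw [hi] at h2
            exact Bool.false_ne_true h2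
        rw [heq]
        exact hgood _ hvK'
      obtain ⟨x, hx⟩ := masked_completion S hfib hmor n v φ hyp
      set φ' : (Fin n → Bool) → X := fun η => if η = v then x else φ η with hφ'
      have hgoodv : (fun ω => φ' (mmeet ω v)) ∈ S.cubes n := by
        have heq : (fun ω => φ' (mmeet ω v)) =
            (fun ω => if mmeet ω v = v then x else φ (mmeet ω v)) := by
          funext ω
          by_cases hc : mmeet ω v = v
          · simp [hφ', hc]
          · simp [hφ', hc]
        rw [heq]
        exact hx
      have step := ih (insert v K) φ' ?_ ?_ ?_
      · obtain ⟨ψ, hψ, hψeq⟩ := step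
        refine ⟨ψ, hψ, fun ω hω => ?_⟩
        have h1 := hψeq ω (Finset.mem_insert_of_mem hω)
        rw [h1]
        have hne : ω ≠ v := fun hh => hvK (hh ▸ hω)
        simp [hφ', hne]
      · -- cardinality
        rw [Finset.compl_insert]
        have h1 : (Kᶜ.erase v).card = Kᶜ.card - 1 := Finset.card_erase_of_mem hvKc
        have h2 : 1 ≤ Kᶜ.card := Finset.card_pos.mpr ⟨v, hvKc⟩
        omega
      · -- downward closed
        intro u hu w hw
        rcases Finset.mem_insert.mp hu with hu | hu
        · subst hu
          rcases lt_or_eq_of_le hw with hlt | heq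
          · exact Finset.mem_insert_of_mem (hpred w hlt)
          · exact heq ▸ Finset.mem_insert_self _ _
        · exact Finset.mem_insert_of_mem (hdown u hu w hw)
      · -- goodness
        intro u hu
        rcases Finset.mem_insert.mp hu with hu | hu
        · subst hu
          exact hgoodv
        · have heq : (fun ω => φ' (mmeet ω u)) = (fun ω => φ (mmeet ω u)) := by
            funext ω
            have hne : mmeet ω u ≠ v := by
              intro hh
              apply hvK
              apply hdown u hu
              rw [← hh]
              intro j
              exact Bool.and_le_right _ _
            simp [hφ', hne]
          rw [heq]
          exact hgood u hu

/-- reversal of a concatenation -/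
lemma concat_rev (S : CubeFamily X)
    (hmor : ∀ {k l : ℕ} (ρ : (Fin k → Bool) → (Fin l → Bool)), IsDiscreteCubeMorphism ρ →
      ∀ c ∈ S.cubes l, (fun ω => c (ρ ω)) ∈ S.cubes k)
    {k : ℕ} {c₁ c₂ : (Fin k → Bool) → X}
    (h : concatCube c₁ c₂ ∈ S.cubes (k + 1)) : concatCube c₂ c₁ ∈ S.cubes (k + 1) := by
  set ν : (Fin (k + 1) → Bool) → (Fin (k + 1) → Bool) :=
    fun ω j => if j = Fin.last k then !(ω (Fin.last k)) else ω j with hν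
  have mν : IsDiscreteCubeMorphism ν := by
    intro j
    by_cases hj : j = Fin.last k
    · exact Or.inr (Or.inr (Or.inr ⟨Fin.last k, fun ω => by simp [hν, hj]⟩))
    · exact Or.inr (Or.inr (Or.inl ⟨j, fun ω => by simp [hν, hj]⟩))
  have comp := hmor ν mν _ h
  have comp' : (fun ω => concatCube c₁ c₂ (ν ω)) ∈ S.cubes (k + 1) := comp
  have heq : (fun ω => concatCube c₁ c₂ (ν ω)) = concatCube c₂ c₁ := by
    funext ω
    have hlast : ν ω (Fin.last k) = !(ω (Fin.last k)) := by simp [hν]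
    have hcast : ∀ i : Fin k, ν ω i.castSucc = ω i.castSucc := by
      intro i
      simp [hν, (Fin.castSucc_lt_last i).ne]
    simp only [concatCube, hlast, hcast]
    cases hl : ω (Fin.last k) <;> simp
  rw [heq] at comp'
  exact comp'

end GluingAux

/-- fibrant cubespaces satisfy the gluing property. -/
theorem fibrant_is_gluing {X : Type*} [MetricSpace X]
    (S : CubeFamily X) (hS : S.IsCubespace) (hfib : IsFibrant S) :
    IsGluing S := by
  intro k c₁ c₂ c₃ _ _ _ h₁₂ h₂₃
  have hmor : ∀ {a b : ℕ} (ρ : (Fin a → Bool) → (Fin b → Bool)), IsDiscreteCubeMorphism ρ →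
      ∀ c ∈ S.cubes b, (fun ω => c (ρ ω)) ∈ S.cubes a := fun ρ hρ c hc => hS.2.2 ρ hρ c hc
  set A : Fin (k + 2) := (Fin.last k).castSucc with hA
  set B : Fin (k + 2) := Fin.last (k + 1) with hB
  set res : (Fin (k + 2) → Bool) → (Fin k → Bool) := fun η i => η i.castSucc.castSucc with hres
  set φ₀ : (Fin (k + 2) → Bool) → X := fun η =>
    if η A then (if η B then c₂ (res η) else c₃ (res η))
    else (if η B then c₁ (res η) else c₂ (res η)) with hφ₀
  set K₀ : Finset (Fin (k + 2) → Bool) :=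
    Finset.univ.filter (fun η => η A = false ∨ η B = false) with hK₀
  have memK₀ : ∀ η : Fin (k + 2) → Bool, η ∈ K₀ ↔ (η A = false ∨ η B = false) := by
    intro η
    simp [hK₀]
  have hdown : ∀ u ∈ K₀, ∀ w : Fin (k + 2) → Bool, w ≤ u → w ∈ K₀ := by
    intro u hu w hw
    rcases (memK₀ u).mp hu with hu' | hu'
    · exact (memK₀ w).mpr (Or.inl (le_antisymm (hu' ▸ hw A) (Bool.false_le _)))
    · exact (memK₀ w).mpr (Or.inr (le_antisymm (hu' ▸ hw B) (Bool.false_le _)))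
  have hAB : A ≠ B := (Fin.castSucc_lt_last (Fin.last k)).ne
  have hcsB : ∀ i : Fin k, (i.castSucc.castSucc : Fin (k + 2)) ≠ B :=
    fun i => (Fin.castSucc_lt_last i.castSucc).ne
  have hgood : ∀ v ∈ K₀, (fun ω => φ₀ (mmeet ω v)) ∈ S.cubes (k + 2) := by
    intro v hv
    rcases (memK₀ v).mp hv with hv' | hv'
    · -- v A = false : restriction is a pullback of [c₂,c₁]
      have hQ : concatCube c₂ c₁ ∈ S.cubes (k + 1) := concat_rev S hmor h₁₂
      set ρ : (Fin (k + 2) → Bool) → (Fin (k + 1) → Bool) := fun ω j =>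
        if j = Fin.last k then ω B && v B else ω j.castSucc && v j.castSucc with hρ
      have mρ : IsDiscreteCubeMorphism ρ := by
        intro j
        by_cases hj : j = Fin.last k
        · cases hvB : v B with
          | false => exact Or.inl (fun ω => by simp [hρ, hj, hvB])
          | true => exact Or.inr (Or.inr (Or.inl ⟨B, fun ω => by simp [hρ, hj, hvB]⟩))
        · cases hvj : v j.castSucc with
          | false => exact Or.inl (fun ω => by simp [hρ, hj, hvj])
          | true => exact Or.inr (Or.inr (Or.inl ⟨j.castSucc, fun ω => by simp [hρ, hj, hvj]⟩))
      have comp := hmor ρ mρ _ hQ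
      have comp' : (fun ω => concatCube c₂ c₁ (ρ ω)) ∈ S.cubes (k + 2) := comp
      have heq : (fun ω => concatCube c₂ c₁ (ρ ω)) = (fun ω => φ₀ (mmeet ω v)) := by
        funext ω
        have h1 : ρ ω (Fin.last k) = (ω B && v B) := by simp [hρ]
        have h2 : ∀ i : Fin k, ρ ω i.castSucc = (ω i.castSucc.castSucc && v i.castSucc.castSucc) :=
          fun i => by simp [hρ, (Fin.castSucc_lt_last i).ne]
        have h3 : (ω A && v A) = false := by rw [hv']; simp
        have e0 : (mmeet ω v) A = false := h3
        have e1 : φ₀ (mmeet ω v) = if (mmeet ω v) B = true then c₁ (res (mmeet ω v))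
            else c₂ (res (mmeet ω v)) := by
          simp only [hφ₀, e0]
          simp
        have e2 : concatCube c₂ c₁ (ρ ω) = if (ω B && v B) = true
            then c₁ (fun i => (ω i.castSucc.castSucc && v i.castSucc.castSucc))
            else c₂ (fun i => (ω i.castSucc.castSucc && v i.castSucc.castSucc)) := by
          simp only [concatCube, h1, h2]
        rw [e2, e1]
        rfl
      rw [heq] at comp'
      exact comp'
    · -- v B = false : restriction is a pullback of [c₂,c₃]
      set ρ : (Fin (k + 2) → Bool) → (Fin (k + 1) → Bool) := fun ω j =>
        if j = Fin.last k then ω A && v A else ω j.castSucc && v j.castSucc with hρ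
      have mρ : IsDiscreteCubeMorphism ρ := by
        intro j
        by_cases hj : j = Fin.last k
        · cases hvA : v A with
          | false => exact Or.inl (fun ω => by simp [hρ, hj, hvA])
          | true => exact Or.inr (Or.inr (Or.inl ⟨A, fun ω => by simp [hρ, hj, hvA]⟩))
        · cases hvj : v j.castSucc with
          | false => exact Or.inl (fun ω => by simp [hρ, hj, hvj])
          | true => exact Or.inr (Or.inr (Or.inl ⟨j.castSucc, fun ω => by simp [hρ, hj, hvj]⟩))
      have comp := hmor ρ mρ _ h₂₃
      have comp' : (fun ω => concatCube c₂ c₃ (ρ ω)) ∈ S.cubes (k + 2) := comp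
      have heq : (fun ω => concatCube c₂ c₃ (ρ ω)) = (fun ω => φ₀ (mmeet ω v)) := by
        funext ω
        have h1 : ρ ω (Fin.last k) = (ω A && v A) := by simp [hρ]
        have h2 : ∀ i : Fin k, ρ ω i.castSucc = (ω i.castSucc.castSucc && v i.castSucc.castSucc) :=
          fun i => by simp [hρ, (Fin.castSucc_lt_last i).ne]
        have h3 : (ω B && v B) = false := by rw [hv']; simp
        have e0 : (mmeet ω v) B = false := h3
        have e1 : φ₀ (mmeet ω v) = if (mmeet ω v) A = true then c₃ (res (mmeet ω v))
            else c₂ (res (mmeet ω v)) := by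
          simp only [hφ₀, e0]
          simp
        have e2 : concatCube c₂ c₃ (ρ ω) = if (ω A && v A) = true
            then c₃ (fun i => (ω i.castSucc.castSucc && v i.castSucc.castSucc))
            else c₂ (fun i => (ω i.castSucc.castSucc && v i.castSucc.castSucc)) := by
          simp only [concatCube, h1, h2]
        rw [e2, e1]
        rfl
      rw [heq] at comp'
      exact comp'
  obtain ⟨ψ, hψ, hagree⟩ :=
    fill_lemma S hfib hmor (k + 2) K₀ᶜ.card K₀ φ₀ le_rfl hdown hgood
  -- read off the antidiagonal
  set π : (Fin (k + 1) → Bool) → (Fin (k + 2) → Bool) := fun ω j =>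
    if h : j = Fin.last (k + 1) then !(ω (Fin.last k)) else ω (j.castPred h) with hπ
  have mπ : IsDiscreteCubeMorphism π := by
    intro j
    by_cases hj : j = Fin.last (k + 1)
    · refine Or.inr (Or.inr (Or.inr ⟨Fin.last k, fun ω => ?_⟩))
      simp [hπ, hj]
    · refine Or.inr (Or.inr (Or.inl ⟨j.castPred hj, fun ω => ?_⟩))
      simp [hπ, hj]
  have comp := hmor π mπ _ hψ
  have comp' : (fun ω => ψ (π ω)) ∈ S.cubes (k + 1) := comp
  have hπA : ∀ ω, π ω A = ω (Fin.last k) := by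
    intro ω
    simp only [hπ, hA, dif_neg hAB]
    rw [dif_neg (show (Fin.last k).castSucc ≠ Fin.last (k + 1) from hAB), Fin.castPred_castSucc]
  have hπB : ∀ ω, π ω B = !(ω (Fin.last k)) := by
    intro ω
    simp [hπ, hB]
  have hπres : ∀ (ω : Fin (k + 1) → Bool) (i : Fin k),
      π ω (i.castSucc.castSucc) = ω i.castSucc := by
    intro ω i
    simp only [hπ, dif_neg (hcsB i)]
    rw [dif_neg (show i.castSucc.castSucc ≠ Fin.last (k + 1) from hcsB i), Fin.castPred_castSucc]
  have hπK : ∀ ω, π ω ∈ K₀ := by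
    intro ω
    refine (memK₀ _).mpr ?_
    cases h : ω (Fin.last k) with
    | true => exact Or.inr (by rw [hπB, h]; rfl)
    | false => exact Or.inl (by rw [hπA, h])
  have heq : (fun ω => ψ (π ω)) = concatCube c₁ c₃ := by
    funext ω
    rw [hagree _ (hπK ω)]
    have e2 : res (π ω) = fun i => ω i.castSucc := funext fun i => hπres ω i
    have e1 : φ₀ (π ω) = if ω (Fin.last k) = true then c₃ (res (π ω))
        else c₁ (res (π ω)) := by
      simp only [hφ₀, hπA, hπB]
      cases h : ω (Fin.last k) <;> simp
    rw [e1, e2]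
    show _ = concatCube c₁ c₃ ω
    simp only [concatCube]
  rw [heq] at comp'
  exact comp'
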